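/- As formal power series in k, exp(kx) · exp(t(e^{ak²} - 1)/(q-1)) = Σ_{N≥0} (k^N/N!) K_N(x,t), where K_N(x,t) = Σ_{n=0}^{⌊N/2⌋} (N!/((N-2n)! n!)) x^{N-2n} B_n(t/(q-1)) a^n, with B_n the Bell polynomials and a = ν ln q. -/

import Mathlib

/-- Stirling numbers of the second kind. -/
def stirling2 : ℕ → ℕ → ℕ
  | 0, 0 => 1
  | 0, _ + 1 => 0
  | _ + 1, 0 => 0
  | n + 1, k + 1 => (k + 1) * stirling2 n (k + 1) + stirling2 n k

/-- Bell (Touchard) polynomials `B_n(x) = Σ_{k=0}^n S(n,k) x^k`. -/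
noncomputable def bellPoly (n : ℕ) : Polynomial ℝ :=
  ∑ k ∈ Finset.range (n + 1), (stirling2 n k : ℝ) • Polynomial.X ^ k

/-- Generalized Kampe de Feriet polynomials
`K_N(x,t) = Σ_{n=0}^{⌊N/2⌋} N!/((N-2n)! n!) x^{N-2n} B_n(t/(q-1)) a^n`, `a = ν ln q`. -/
noncomputable def KdF (ν t x q : ℝ) (N : ℕ) : ℝ :=
  ∑ n ∈ Finset.range (N / 2 + 1),
    (N.factorial : ℝ) / (((N - 2 * n).factorial : ℝ) * (n.factorial : ℝ)) *
      x ^ (N - 2 * n) * (bellPoly n).eval (t / (q - 1)) * (ν * Real.log q) ^ n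

open Finset

lemma hasSum_exp_real (r : ℝ) :
    HasSum (fun n : ℕ => r ^ n / (n.factorial : ℝ)) (Real.exp r) := by
  rw [Real.exp_eq_exp_ℝ]
  exact NormedSpace.expSeries_div_hasSum_exp r

lemma stirling2_eq_zero : ∀ {n k : ℕ}, n < k → stirling2 n k = 0
  | 0, _ + 1, _ => rfl
  | n + 1, k + 1, h => by
    have h1 : n < k + 1 := by omega
    have h2 : n < k := by omega
    simp [stirling2, stirling2_eq_zero h1, stirling2_eq_zero h2]

lemma choose_cast_id (j i : ℕ) :
    (j : ℝ) * (j.choose i : ℝ) =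
      ((i : ℝ) + 1) * (j.choose (i + 1) : ℝ) + (i : ℝ) * (j.choose i : ℝ) := by
  rcases le_or_gt i j with h | h
  · have := Nat.choose_succ_right_eq j i
    have hcast : (j.choose (i + 1) : ℝ) * ((i : ℝ) + 1) = (j.choose i : ℝ) * ((j : ℝ) - i) := by
      have := congrArg (fun m : ℕ => (m : ℝ)) this
      push_cast [Nat.cast_sub h] at this ⊢
      exact_mod_cast this
    nlinarith [hcast]
  · rw [Nat.choose_eq_zero_of_lt h, Nat.choose_eq_zero_of_lt (by omega)]
    simp

lemma pow_eq_sum_stirling (n j : ℕ) :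
    (j : ℝ) ^ n =
      ∑ i ∈ range (n + 1),
        (stirling2 n i : ℝ) * (i.factorial : ℝ) * (j.choose i : ℝ) := by
  induction n with
  | zero => simp [stirling2]
  | succ n ih =>
    have key : ∀ i : ℕ, (stirling2 n i : ℝ) * (i.factorial : ℝ) * (j.choose i : ℝ) * (j : ℝ)
        = (stirling2 n i : ℝ) * ((i + 1).factorial : ℝ) * (j.choose (i + 1) : ℝ)
          + (i : ℝ) * ((stirling2 n i : ℝ) * (i.factorial : ℝ) * (j.choose i : ℝ)) := by
      intro i
      have h := choose_cast_id j i
      have hfac : ((i + 1).factorial : ℝ) = ((i : ℝ) + 1) * (i.factorial : ℝ) := by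
        push_cast [Nat.factorial_succ]; ring
      rw [hfac]
      linear_combination ((stirling2 n i : ℝ) * (i.factorial : ℝ)) * h
    have htop : stirling2 n (n + 1) = 0 := stirling2_eq_zero (by omega)
    have hrec : ∀ i : ℕ, (stirling2 (n + 1) (i + 1) : ℝ)
        = ((i : ℝ) + 1) * (stirling2 n (i + 1) : ℝ) + (stirling2 n i : ℝ) := by
      intro i
      rw [show stirling2 (n + 1) (i + 1) = (i + 1) * stirling2 n (i + 1) + stirling2 n i from rfl]
      push_cast; ring
    have piece2 : ∑ i ∈ range (n + 1),
        (i : ℝ) * ((stirling2 n i : ℝ) * (i.factorial : ℝ) * (j.choose i : ℝ))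
        = ∑ i ∈ range (n + 1),
          ((i : ℝ) + 1) * (stirling2 n (i + 1) : ℝ) * ((i + 1).factorial : ℝ)
            * (j.choose (i + 1) : ℝ) := by
      rw [Finset.sum_range_succ'
        (fun i => (i : ℝ) * ((stirling2 n i : ℝ) * (i.factorial : ℝ) * (j.choose i : ℝ))) n]
      rw [Finset.sum_range_succ
        (fun i => ((i : ℝ) + 1) * (stirling2 n (i + 1) : ℝ) * ((i + 1).factorial : ℝ)
          * (j.choose (i + 1) : ℝ)) n]
      simp only [htop, Nat.cast_zero, zero_mul, mul_zero, add_zero]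
      exact Finset.sum_congr rfl fun i _ => by push_cast; ring
    rw [pow_succ, ih, Finset.sum_mul]
    calc
      ∑ i ∈ range (n + 1),
          (stirling2 n i : ℝ) * (i.factorial : ℝ) * (j.choose i : ℝ) * (j : ℝ)
        = ∑ i ∈ range (n + 1),
            ((stirling2 n i : ℝ) * ((i + 1).factorial : ℝ) * (j.choose (i + 1) : ℝ)
              + (i : ℝ) * ((stirling2 n i : ℝ) * (i.factorial : ℝ) * (j.choose i : ℝ))) :=
          Finset.sum_congr rfl fun i _ => key i
      _ = ∑ i ∈ range (n + 1),
            (stirling2 n i : ℝ) * ((i + 1).factorial : ℝ) * (j.choose (i + 1) : ℝ)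
          + ∑ i ∈ range (n + 1),
            (i : ℝ) * ((stirling2 n i : ℝ) * (i.factorial : ℝ) * (j.choose i : ℝ)) :=
          Finset.sum_add_distrib
      _ = ∑ i ∈ range (n + 1),
            ((stirling2 n i : ℝ) * ((i + 1).factorial : ℝ) * (j.choose (i + 1) : ℝ)
              + ((i : ℝ) + 1) * (stirling2 n (i + 1) : ℝ) * ((i + 1).factorial : ℝ)
                * (j.choose (i + 1) : ℝ)) := by
          rw [piece2, ← Finset.sum_add_distrib]
      _ = ∑ i ∈ range (n + 1),
            (stirling2 (n + 1) (i + 1) : ℝ) * ((i + 1).factorial : ℝ)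
              * (j.choose (i + 1) : ℝ) :=
          Finset.sum_congr rfl fun i _ => by rw [hrec i]; ring
      _ = ∑ i ∈ range (n + 2),
            (stirling2 (n + 1) i : ℝ) * (i.factorial : ℝ) * (j.choose i : ℝ) := by
          rw [Finset.sum_range_succ'
            (fun i => (stirling2 (n + 1) i : ℝ) * (i.factorial : ℝ) * (j.choose i : ℝ)) (n + 1)]
          simp [stirling2]

lemma bellPoly_eval (n : ℕ) (y : ℝ) :
    (bellPoly n).eval y = ∑ i ∈ range (n + 1), (stirling2 n i : ℝ) * y ^ i := by
  simp [bellPoly, Polynomial.eval_finset_sum]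

lemma hasSum_choose (y : ℝ) (i : ℕ) :
    HasSum (fun j : ℕ => (j.choose i : ℝ) * (i.factorial : ℝ) / (j.factorial : ℝ) * y ^ j)
      (y ^ i * Real.exp y) := by
  have hinj : Function.Injective (fun m : ℕ => m + i) := fun a b h => by simpa using h
  have hzero : ∀ j : ℕ, j ∉ Set.range (fun m : ℕ => m + i) →
      (j.choose i : ℝ) * (i.factorial : ℝ) / (j.factorial : ℝ) * y ^ j = 0 := by
    intro j hj
    rcases lt_or_ge j i with hlt | hge
    · rw [Nat.choose_eq_zero_of_lt hlt]; simp
    · exact absurd ⟨j - i, show j - i + i = j by omega⟩ hj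
  rw [← Function.Injective.hasSum_iff hinj hzero]
  have h := (hasSum_exp_real y).mul_left (y ^ i)
  refine h.congr_fun fun m => ?_
  show ((m + i).choose i : ℝ) * (i.factorial : ℝ) / ((m + i).factorial : ℝ) * y ^ (m + i)
    = y ^ i * (y ^ m / (m.factorial : ℝ))
  have hfac : ((m + i).choose i : ℝ) * (m.factorial : ℝ) * (i.factorial : ℝ)
      = ((m + i).factorial : ℝ) := by
    exact_mod_cast congrArg (fun z : ℕ => (z : ℝ))
      (Nat.add_choose_mul_factorial_mul_factorial m i)
  have hm : (m.factorial : ℝ) ≠ 0 := Nat.cast_ne_zero.mpr (Nat.factorial_ne_zero m)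
  have hmi : ((m + i).factorial : ℝ) ≠ 0 := Nat.cast_ne_zero.mpr (Nat.factorial_ne_zero _)
  field_simp
  linear_combination (y ^ m * y ^ i) * hfac

lemma dobinski (y : ℝ) (n : ℕ) :
    HasSum (fun j : ℕ => (j : ℝ) ^ n * y ^ j / (j.factorial : ℝ))
      (Real.exp y * (bellPoly n).eval y) := by
  have h : ∀ i ∈ range (n + 1),
      HasSum (fun j : ℕ => (stirling2 n i : ℝ) *
          ((j.choose i : ℝ) * (i.factorial : ℝ) / (j.factorial : ℝ) * y ^ j))
        ((stirling2 n i : ℝ) * (y ^ i * Real.exp y)) :=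
    fun i _ => (hasSum_choose y i).mul_left _
  have H := hasSum_sum h
  have hval : ∑ i ∈ range (n + 1), (stirling2 n i : ℝ) * (y ^ i * Real.exp y)
      = Real.exp y * (bellPoly n).eval y := by
    rw [bellPoly_eval, Finset.mul_sum]
    exact Finset.sum_congr rfl fun i _ => by ring
  rw [hval] at H
  refine H.congr_fun fun j => ?_
  show (j : ℝ) ^ n * y ^ j / (j.factorial : ℝ)
    = ∑ i ∈ range (n + 1), (stirling2 n i : ℝ) *
        ((j.choose i : ℝ) * (i.factorial : ℝ) / (j.factorial : ℝ) * y ^ j)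
  rw [pow_eq_sum_stirling n j, Finset.sum_mul, Finset.sum_div]
  exact Finset.sum_congr rfl fun i _ => by ring

lemma abs_term (y z : ℝ) (j n : ℕ) :
    |((j : ℝ) * z) ^ n / (n.factorial : ℝ) * (y ^ j / (j.factorial : ℝ))|
      = ((j : ℝ) * |z|) ^ n / (n.factorial : ℝ) * (|y| ^ j / (j.factorial : ℝ)) := by
  rw [abs_mul, abs_div, abs_div, abs_pow, abs_pow, abs_mul, Nat.abs_cast, Nat.abs_cast,
    Nat.abs_cast]

lemma hasSum_bell (y z : ℝ) :
    HasSum (fun n : ℕ => (bellPoly n).eval y * z ^ n / (n.factorial : ℝ))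
      (Real.exp (y * (Real.exp z - 1))) := by
  -- the double family, first coordinate j, second coordinate n
  set F : ℕ × ℕ → ℝ := fun p => ((p.1 : ℝ) * z) ^ p.2 / (p.2.factorial : ℝ) *
    (y ^ p.1 / (p.1.factorial : ℝ)) with hF
  have habs : Summable fun p : ℕ × ℕ => |F p| := by
    have hnn : (0 : ℕ × ℕ → ℝ) ≤ fun p => |F p| := fun p => abs_nonneg _
    rw [summable_prod_of_nonneg hnn]
    constructor
    · intro j
      have h1 := ((hasSum_exp_real ((j : ℝ) * |z|)).mul_right
        (|y| ^ j / (j.factorial : ℝ))).summable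
      exact h1.congr fun n => (abs_term y z j n).symm
    · have h2 := (hasSum_exp_real (|y| * Real.exp |z|)).summable
      refine Summable.of_nonneg_of_le (fun j => tsum_nonneg fun n => abs_nonneg _)
        (fun j => ?_) h2
      have hin : HasSum (fun n : ℕ => |F (j, n)|)
          (Real.exp ((j : ℝ) * |z|) * (|y| ^ j / (j.factorial : ℝ))) := by
        have h1 := (hasSum_exp_real ((j : ℝ) * |z|)).mul_right (|y| ^ j / (j.factorial : ℝ))
        exact h1.congr_fun fun n => abs_term y z j n
      rw [hin.tsum_eq]
      have : Real.exp ((j : ℝ) * |z|) * (|y| ^ j / (j.factorial : ℝ))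
          = (|y| * Real.exp |z|) ^ j / (j.factorial : ℝ) := by
        rw [mul_pow, ← Real.exp_nat_mul]
        ring
      rw [this]
  have hsumF : Summable F := habs.of_abs
  obtain ⟨S, hS⟩ := hsumF
  -- identify S by summing over n first (fixed j)
  have hSid : S = Real.exp (y * Real.exp z) := by
    have hrow : ∀ j : ℕ, HasSum (fun n : ℕ => F (j, n))
        ((y * Real.exp z) ^ j / (j.factorial : ℝ)) := by
      intro j
      have h1 := (hasSum_exp_real ((j : ℝ) * z)).mul_right (y ^ j / (j.factorial : ℝ))
      have heq : Real.exp ((j : ℝ) * z) * (y ^ j / (j.factorial : ℝ))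
          = (y * Real.exp z) ^ j / (j.factorial : ℝ) := by
        rw [mul_pow, ← Real.exp_nat_mul]
        ring
      rw [heq] at h1
      exact h1.congr_fun fun n => rfl
    have := HasSum.prod_fiberwise hS hrow
    exact this.unique (hasSum_exp_real (y * Real.exp z))
  -- sum over j first (fixed n)
  have hswap : HasSum (fun p : ℕ × ℕ => F (p.2, p.1)) S := by
    have := (Equiv.prodComm ℕ ℕ).hasSum_iff.mpr hS
    exact this.congr_fun fun p => rfl
  have hcol : ∀ n : ℕ, HasSum (fun j : ℕ => F (j, n))
      (z ^ n / (n.factorial : ℝ) * (Real.exp y * (bellPoly n).eval y)) := by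
    intro n
    have h1 := (dobinski y n).mul_left (z ^ n / (n.factorial : ℝ))
    refine h1.congr_fun fun j => ?_
    show F (j, n) = z ^ n / (n.factorial : ℝ) * ((j : ℝ) ^ n * y ^ j / (j.factorial : ℝ))
    simp only [hF, mul_pow]
    ring
  have hfin := HasSum.prod_fiberwise hswap (fun n => hcol n)
  rw [hSid] at hfin
  have hmul := hfin.mul_left (Real.exp (-y))
  have hval2 : Real.exp (-y) * Real.exp (y * Real.exp z)
      = Real.exp (y * (Real.exp z - 1)) := by
    rw [← Real.exp_add]
    congr 1
    ring
  rw [hval2] at hmul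
  refine hmul.congr_fun fun n => ?_
  show (bellPoly n).eval y * z ^ n / (n.factorial : ℝ)
    = Real.exp (-y) * (z ^ n / (n.factorial : ℝ) * (Real.exp y * (bellPoly n).eval y))
  rw [Real.exp_neg]
  have hy : Real.exp y ≠ 0 := Real.exp_ne_zero y
  field_simp

lemma abs_bellPoly_le (n : ℕ) (y : ℝ) :
    |(bellPoly n).eval y| ≤ (bellPoly n).eval |y| := by
  rw [bellPoly_eval, bellPoly_eval]
  refine (Finset.abs_sum_le_sum_abs _ _).trans (Finset.sum_le_sum fun i _ => ?_)
  rw [abs_mul, abs_pow, Nat.abs_cast]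

theorem KdF_generating_function (ν t x q k : ℝ) (hq : 0 < q) (hq1 : q ≠ 1) :
    HasSum (fun N : ℕ => k ^ N / (N.factorial : ℝ) * KdF ν t x q N)
      (Real.exp (k * x) *
        Real.exp (t * (Real.exp (ν * Real.log q * k ^ 2) - 1) / (q - 1))) := by
  set y : ℝ := t / (q - 1) with hy
  set a : ℝ := ν * Real.log q with ha
  set z : ℝ := a * k ^ 2 with hz
  have h1 := hasSum_exp_real (k * x)
  have h2 := hasSum_bell y z
  have hexp_eq : Real.exp (t * (Real.exp (a * k ^ 2) - 1) / (q - 1))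
      = Real.exp (y * (Real.exp z - 1)) := by
    congr 1
    rw [hy, hz]
    ring
  rw [hexp_eq]
  -- norm summability
  have hn1 : Summable fun m : ℕ => ‖(k * x) ^ m / (m.factorial : ℝ)‖ := by
    refine (hasSum_exp_real |k * x|).summable.congr fun m => ?_
    rw [Real.norm_eq_abs, abs_div, abs_pow, Nat.abs_cast]
  have hn2 : Summable fun n : ℕ => ‖(bellPoly n).eval y * z ^ n / (n.factorial : ℝ)‖ := by
    refine Summable.of_nonneg_of_le (fun n => norm_nonneg _) (fun n => ?_)
      (hasSum_bell |y| |z|).summable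
    rw [Real.norm_eq_abs, abs_div, abs_mul, abs_pow, Nat.abs_cast]
    gcongr
    exact abs_bellPoly_le n y
  have hsummul : Summable (fun p : ℕ × ℕ => (k * x) ^ p.1 / (p.1.factorial : ℝ) *
      ((bellPoly p.2).eval y * z ^ p.2 / (p.2.factorial : ℝ))) :=
    summable_mul_of_summable_norm (f := fun m : ℕ => (k * x) ^ m / (m.factorial : ℝ))
      (g := fun n : ℕ => (bellPoly n).eval y * z ^ n / (n.factorial : ℝ)) hn1 hn2
  have H : HasSum (fun p : ℕ × ℕ => (k * x) ^ p.1 / (p.1.factorial : ℝ) *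
      ((bellPoly p.2).eval y * z ^ p.2 / (p.2.factorial : ℝ)))
      (Real.exp (k * x) * Real.exp (y * (Real.exp z - 1))) :=
    HasSum.mul (f := fun m : ℕ => (k * x) ^ m / (m.factorial : ℝ))
      (g := fun n : ℕ => (bellPoly n).eval y * z ^ n / (n.factorial : ℝ)) h1 h2 hsummul
  -- regroup via the bijection (Σ N, Fin (N/2+1)) ≃ ℕ × ℕ
  set f : ℕ × ℕ → ℝ := fun p => (k * x) ^ p.1 / (p.1.factorial : ℝ) *
    ((bellPoly p.2).eval y * z ^ p.2 / (p.2.factorial : ℝ)) with hf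
  set ι : (Σ N : ℕ, Fin (N / 2 + 1)) → ℕ × ℕ :=
    fun s => (s.1 - 2 * (s.2 : ℕ), (s.2 : ℕ)) with hι
  have hinj : Function.Injective ι := by
    rintro ⟨N, n⟩ ⟨M, m⟩ h
    simp only [hι, Prod.mk.injEq] at h
    obtain ⟨h1', h2'⟩ := h
    have hn := n.isLt
    have hm := m.isLt
    have hN : 2 * (n : ℕ) ≤ N := by omega
    have hM : 2 * (m : ℕ) ≤ M := by omega
    have : N = M := by omega
    subst this
    simp only [Sigma.mk.inj_iff, heq_eq_eq, true_and]
    exact Fin.ext h2'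
  have hsurj : ∀ p : ℕ × ℕ, p ∈ Set.range ι := by
    rintro ⟨m, n⟩
    exact ⟨⟨m + 2 * n, ⟨n, by omega⟩⟩, by simp [hι]⟩
  have H' : HasSum (f ∘ ι) (Real.exp (k * x) * Real.exp (y * (Real.exp z - 1))) := by
    rw [Function.Injective.hasSum_iff hinj (fun p hp => absurd (hsurj p) hp)]
    exact H
  refine HasSum.sigma H' fun N => ?_
  have hfin : HasSum (fun n : Fin (N / 2 + 1) => (f ∘ ι) ⟨N, n⟩)
      (∑ n : Fin (N / 2 + 1), (f ∘ ι) ⟨N, n⟩) := hasSum_fintype _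
  have hval : ∑ n : Fin (N / 2 + 1), (f ∘ ι) ⟨N, n⟩
      = k ^ N / (N.factorial : ℝ) * KdF ν t x q N := by
    have hstep : ∑ n : Fin (N / 2 + 1), (f ∘ ι) ⟨N, n⟩
        = ∑ n ∈ range (N / 2 + 1), f (N - 2 * n, n) :=
      Fin.sum_univ_eq_sum_range (fun m => f (N - 2 * m, m)) (N / 2 + 1)
    rw [hstep, KdF, Finset.mul_sum]
    refine Finset.sum_congr rfl fun n hn => ?_
    have h2n : 2 * n ≤ N := by
      have := Finset.mem_range.mp hn
      omega
    have hk : k ^ (N - 2 * n) * k ^ (2 * n) = k ^ N := by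
      rw [← pow_add]
      congr 1
      omega
    show (k * x) ^ (N - 2 * n) / ((N - 2 * n).factorial : ℝ) *
        ((bellPoly n).eval y * z ^ n / (n.factorial : ℝ))
      = k ^ N / (N.factorial : ℝ) *
        ((N.factorial : ℝ) / (((N - 2 * n).factorial : ℝ) * (n.factorial : ℝ)) *
          x ^ (N - 2 * n) * (bellPoly n).eval y * a ^ n)
    have hNf : (N.factorial : ℝ) ≠ 0 := Nat.cast_ne_zero.mpr (Nat.factorial_ne_zero _)
    have hN2f : ((N - 2 * n).factorial : ℝ) ≠ 0 := Nat.cast_ne_zero.mpr (Nat.factorial_ne_zero _)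
    have hnf : ((n.factorial : ℕ) : ℝ) ≠ 0 := Nat.cast_ne_zero.mpr (Nat.factorial_ne_zero _)
    rw [mul_pow, hz, mul_pow, ← pow_mul]
    field_simp
    rw [← hk]
    ring
  rw [← hval]
  exact hfin
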